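/- Let H be an n×n symmetric positive definite matrix and let X = (X_t)_{t∈ℤ} be an n-dimensional strictly stationary process. Then there exists a process G ∈ 𝒢_H such that Δ_t X = (e^{−H} − I) X_{t−1} + Δ_t G for all t ∈ ℤ, and moreover e^{tH} X_t → 0 in probability as t → −∞. Equivalently, X admits the AR(1)-type representation X_t − Φ X_{t−1} = Δ_t G with Φ = e^{−H}. -/

import Mathlib

set_option autoImplicit false

open MeasureTheory Filter Finset Matrix Topology

variable {Ω : Type*}

/-- Two `ℤ`-indexed `ℝⁿ`-valued processes have the same finite-dimensional
distributions. -/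
def SameFDD {n : ℕ} [MeasurableSpace Ω] (μ : Measure Ω)
    (X Y : ℤ → Ω → (Fin n → ℝ)) : Prop :=
  ∀ (m : ℕ) (t : Fin m → ℤ),
    μ.map (fun ω (i : Fin m) => X (t i) ω) = μ.map (fun ω (i : Fin m) => Y (t i) ω)

/-- Strict stationarity of a `ℤ`-indexed process. -/
def IsStationaryProcess {n : ℕ} [MeasurableSpace Ω] (μ : Measure Ω)
    (X : ℤ → Ω → (Fin n → ℝ)) : Prop :=
  ∀ s : ℤ, SameFDD μ (fun t => X (t + s)) X

/-- Stationarity of increments of a `ℤ`-indexed process. -/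
def HasStationaryIncrements {n : ℕ} [MeasurableSpace Ω] (μ : Measure Ω)
    (G : ℤ → Ω → (Fin n → ℝ)) : Prop :=
  ∀ s : ℤ, SameFDD μ (fun t ω => G (t + s) ω - G s ω) (fun t ω => G t ω - G 0 ω)

/-- The matrix exponential `e^{tH}` for an integer `t`. -/
noncomputable def zexp {n : ℕ} (H : Matrix (Fin n) (Fin n) ℝ) (t : ℤ) :
    Matrix (Fin n) (Fin n) ℝ :=
  NormedSpace.exp ((t : ℝ) • H)

/-- The partial sum `Σ_{k=l}^0 e^{kH} Δ_k G`. -/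
noncomputable def partialSumG {n : ℕ} (H : Matrix (Fin n) (Fin n) ℝ)
    (G : ℤ → Ω → (Fin n → ℝ)) (l : ℤ) (ω : Ω) : Fin n → ℝ :=
  ∑ k ∈ Finset.Icc l 0, (zexp H k).mulVec (G k ω - G (k - 1) ω)

/-- `G ∈ 𝒢_H` : `G` is a stationary-increment process starting from `0` whose partial
sums `Σ_{k=l}^0 e^{kH} Δ_k G` converge in probability as `l → −∞`. -/
def MemG {n : ℕ} [MeasurableSpace Ω] (μ : Measure Ω) (H : Matrix (Fin n) (Fin n) ℝ)
    (G : ℤ → Ω → (Fin n → ℝ)) : Prop :=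
  (∀ ω, G 0 ω = 0) ∧ HasStationaryIncrements μ G ∧
    ∃ ξ : Ω → (Fin n → ℝ), TendstoInMeasure μ (fun l => partialSumG H G l) Filter.atBot ξ

namespace Stmt5Aux

lemma sum_Icc_insert_top {M : Type*} [AddCommMonoid M] {a b : ℤ} (h : a ≤ b) (f : ℤ → M) :
    ∑ k ∈ Finset.Icc a b, f k = f b + ∑ k ∈ Finset.Icc a (b - 1), f k := by
  have : Finset.Icc a b = insert b (Finset.Icc a (b - 1)) := by
    ext x; simp only [Finset.mem_Icc, Finset.mem_insert]; omega
  rw [this, Finset.sum_insert (by simp only [Finset.mem_Icc]; omega)]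

lemma sum_Icc_insert_bot {M : Type*} [AddCommMonoid M] {a b : ℤ} (h : a ≤ b) (f : ℤ → M) :
    ∑ k ∈ Finset.Icc a b, f k = f a + ∑ k ∈ Finset.Icc (a + 1) b, f k := by
  have : Finset.Icc a b = insert a (Finset.Icc (a + 1) b) := by
    ext x; simp only [Finset.mem_Icc, Finset.mem_insert]; omega
  rw [this, Finset.sum_insert (by simp only [Finset.mem_Icc]; omega)]

lemma sum_telescope {M : Type*} [AddCommGroup M] (F : ℤ → M) {a b : ℤ} (h : a ≤ b) :
    ∑ k ∈ Finset.Icc a b, (F k - F (k - 1)) = F b - F (a - 1) := by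
  refine Int.le_induction (motive := fun b _ => ∑ k ∈ Finset.Icc a b, (F k - F (k - 1)) = F b - F (a - 1)) ?_ ?_ b h
  · simp
  · intro b hb ih
    rw [sum_Icc_insert_top (by omega) (fun k => F k - F (k - 1))]
    have h3 : b + 1 - 1 = b := by omega
    rw [h3, ih]
    abel

/-- The bilateral partial sum defining `G`. -/
noncomputable def Psum {M : Type*} [AddCommGroup M] (f : ℤ → M) (b : ℤ) : M :=
  ∑ k ∈ Finset.Icc 1 b, f k - ∑ k ∈ Finset.Icc (b + 1) 0, f k

lemma Psum_zero {M : Type*} [AddCommGroup M] (f : ℤ → M) : Psum f 0 = 0 := by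
  simp [Psum]

lemma Psum_sub {M : Type*} [AddCommGroup M] (f : ℤ → M) (b : ℤ) :
    Psum f b - Psum f (b - 1) = f b := by
  unfold Psum
  rcases le_or_gt 1 b with h | h
  · have h1 : Finset.Icc (b + 1) 0 = ∅ := Finset.Icc_eq_empty (by omega)
    have h2 : Finset.Icc (b - 1 + 1) 0 = ∅ := Finset.Icc_eq_empty (by omega)
    rw [h1, h2, sum_Icc_insert_top h f]
    simp
  · have h1 : Finset.Icc 1 b = ∅ := Finset.Icc_eq_empty (by omega)
    have h2 : Finset.Icc 1 (b - 1) = ∅ := Finset.Icc_eq_empty (by omega)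
    have h3 : b - 1 + 1 = b := by omega
    rw [h1, h2, h3, sum_Icc_insert_bot (show b ≤ (0:ℤ) by omega) f]
    simp

lemma Psum_diff_of_le {M : Type*} [AddCommGroup M] (f : ℤ → M) {a b : ℤ} (h : a ≤ b) :
    Psum f b - Psum f a = ∑ k ∈ Finset.Icc (a + 1) b, f k := by
  refine Int.le_induction (motive := fun b _ => Psum f b - Psum f a = ∑ k ∈ Finset.Icc (a + 1) b, f k) ?_ ?_ b h
  · simp [Finset.Icc_eq_empty (show ¬ a + 1 ≤ a by omega)]
  · intro b hb ih
    have h1 : Psum f (b + 1) - Psum f b = f (b + 1) := by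
      have := Psum_sub f (b + 1); simpa using this
    have h2 : ∑ k ∈ Finset.Icc (a + 1) (b + 1), f k
        = f (b + 1) + ∑ k ∈ Finset.Icc (a + 1) b, f k := by
      rw [sum_Icc_insert_top (show a + 1 ≤ b + 1 by omega) f]; norm_num
    rw [h2, ← ih, ← h1]; abel

lemma Psum_diff {M : Type*} [AddCommGroup M] (f : ℤ → M) (a b : ℤ) :
    Psum f b - Psum f a =
      ∑ k ∈ Finset.Icc (a + 1) b, f k - ∑ k ∈ Finset.Icc (b + 1) a, f k := by
  rcases le_total a b with h | h
  · rw [Psum_diff_of_le f h, Finset.Icc_eq_empty (show ¬ b + 1 ≤ a by omega)]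
    simp
  · have := Psum_diff_of_le f h
    rw [Finset.Icc_eq_empty (show ¬ a + 1 ≤ b by omega)]
    have h2 : Psum f b - Psum f a = -(Psum f a - Psum f b) := by abel
    rw [h2, this]; simp

end Stmt5Aux
namespace Stmt5Aux

variable {n : ℕ}

lemma continuous_mulVec (A : Matrix (Fin n) (Fin n) ℝ) :
    Continuous fun x : Fin n → ℝ => A.mulVec x := by
  refine continuous_pi fun i => ?_
  simp only [Matrix.mulVec, dotProduct]
  exact continuous_finset_sum _ fun j _ => continuous_const.mul (continuous_apply j)

/-- An elementary bound for `mulVec` in terms of the sum of absolute values of entries. -/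
def entryBound (A : Matrix (Fin n) (Fin n) ℝ) : ℝ := ∑ i, ∑ j, |A i j|

lemma entryBound_nonneg (A : Matrix (Fin n) (Fin n) ℝ) : 0 ≤ entryBound A := by
  refine Finset.sum_nonneg fun i _ => Finset.sum_nonneg fun j _ => abs_nonneg _

lemma continuous_entryBound : Continuous (entryBound (n := n)) := by
  refine continuous_finset_sum _ fun i _ => continuous_finset_sum _ fun j _ => ?_
  exact (continuous_apply j).comp (continuous_apply i) |>.abs

lemma entryBound_zero : entryBound (0 : Matrix (Fin n) (Fin n) ℝ) = 0 := by
  simp [entryBound]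

lemma norm_mulVec_le (A : Matrix (Fin n) (Fin n) ℝ) (x : Fin n → ℝ) :
    ‖A.mulVec x‖ ≤ entryBound A * ‖x‖ := by
  have hnn : (0:ℝ) ≤ entryBound A * ‖x‖ :=
    mul_nonneg (entryBound_nonneg A) (norm_nonneg _)
  rw [pi_norm_le_iff_of_nonneg hnn]
  intro i
  calc ‖A.mulVec x i‖ = ‖∑ j, A i j * x j‖ := rfl
    _ ≤ ∑ j, ‖A i j * x j‖ := norm_sum_le _ _
    _ ≤ ∑ j, |A i j| * ‖x‖ := by
        refine Finset.sum_le_sum fun j _ => ?_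
        rw [norm_mul]
        exact mul_le_mul_of_nonneg_left (norm_le_pi_norm x j) (abs_nonneg _)
    _ = (∑ j, |A i j|) * ‖x‖ := by rw [Finset.sum_mul]
    _ ≤ entryBound A * ‖x‖ := by
        refine mul_le_mul_of_nonneg_right ?_ (norm_nonneg _)
        exact Finset.single_le_sum (f := fun i => ∑ j, |A i j|)
          (fun i _ => Finset.sum_nonneg fun j _ => abs_nonneg _) (Finset.mem_univ i)

lemma zexp_zero (H : Matrix (Fin n) (Fin n) ℝ) : zexp H 0 = 1 := by
  simp [zexp, NormedSpace.exp_zero]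

lemma zexp_mul_exp_neg (H : Matrix (Fin n) (Fin n) ℝ) (k : ℤ) :
    zexp H k * NormedSpace.exp (-H) = zexp H (k - 1) := by
  have hc : Commute ((k : ℝ) • H) (-H) := ((Commute.refl H).neg_right).smul_left _
  have h := (Matrix.exp_add_of_commute ((k : ℝ) • H) (-H) hc).symm
  rw [zexp, zexp, h]
  congr 1
  have h2 : ((k : ℝ) - 1) • H = (k : ℝ) • H - H := by rw [sub_smul, one_smul]
  push_cast
  rw [h2]
  abel

lemma tendsto_zexp_atBot {H : Matrix (Fin n) (Fin n) ℝ} (hH : H.PosDef) :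
    Tendsto (fun t : ℤ => zexp H t) atBot (𝓝 0) := by
  have hA : H.IsHermitian := hH.1
  set U : Matrix (Fin n) (Fin n) ℝ := (hA.eigenvectorUnitary : Matrix (Fin n) (Fin n) ℝ) with hU
  have hU1 : U * star U = 1 := Matrix.mem_unitaryGroup_iff.mp hA.eigenvectorUnitary.2
  have hU2 : star U * U = 1 := Matrix.mem_unitaryGroup_iff'.mp hA.eigenvectorUnitary.2
  set Uu : (Matrix (Fin n) (Fin n) ℝ)ˣ := ⟨U, star U, hU1, hU2⟩ with hUu
  have hspec : H = U * Matrix.diagonal hA.eigenvalues * star U := by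
    have := hA.spectral_theorem
    simpa [RCLike.ofReal_real_eq_id] using this
  have hzexp : ∀ t : ℤ, zexp H t
      = U * Matrix.diagonal (fun i => Real.exp (t * hA.eigenvalues i)) * star U := by
    intro t
    have h1 : (t : ℝ) • H
        = (Uu : Matrix (Fin n) (Fin n) ℝ) * Matrix.diagonal ((t : ℝ) • hA.eigenvalues)
          * ((Uu⁻¹ : (Matrix (Fin n) (Fin n) ℝ)ˣ) : Matrix (Fin n) (Fin n) ℝ) := by
      rw [Matrix.diagonal_smul]
      show (t : ℝ) • H = U * ((t : ℝ) • Matrix.diagonal hA.eigenvalues) * star U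
      rw [Matrix.mul_smul, Matrix.smul_mul, ← hspec]
    have h2 := Matrix.exp_units_conj Uu (Matrix.diagonal ((t : ℝ) • hA.eigenvalues))
    rw [zexp, h1, h2]
    show U * _ * star U = _
    congr 2
    rw [Matrix.exp_diagonal]
    funext i
    rw [Pi.exp_def]
    simp [← Real.exp_eq_exp_ℝ, mul_comm]
  have hvec : Tendsto (fun t : ℤ => (fun i => Real.exp (t * hA.eigenvalues i)))
      atBot (𝓝 (0 : Fin n → ℝ)) := by
    rw [tendsto_pi_nhds]
    intro i
    have hpos := hH.eigenvalues_pos i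
    have h1 : Tendsto (fun t : ℤ => (t : ℝ)) atBot atBot :=
      tendsto_intCast_atBot_iff.mpr tendsto_id
    have h2 : Tendsto (fun t : ℤ => (t : ℝ) * hA.eigenvalues i) atBot atBot :=
      h1.atBot_mul_const hpos
    exact Real.tendsto_exp_atBot.comp h2
  have hcont : Continuous fun w : Fin n → ℝ => U * Matrix.diagonal w * star U :=
    (continuous_const.mul (continuous_id.matrix_diagonal)).mul continuous_const
  have hfin := (hcont.tendsto 0).comp hvec
  simp only [Function.comp_def] at hfin
  have h0 : U * Matrix.diagonal (0 : Fin n → ℝ) * star U = 0 := by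
    rw [show (diagonal (0 : Fin n → ℝ)) = 0 from Matrix.diagonal_zero, Matrix.mul_zero, Matrix.zero_mul]
  rw [h0] at hfin
  exact hfin.congr fun t => (hzexp t).symm

end Stmt5Aux

/-- The innovation process `Δ_t G = X_t − e^{−H} X_{t−1}`. -/
noncomputable def Dn {Ω : Type*} {n : ℕ} (H : Matrix (Fin n) (Fin n) ℝ)
    (X : ℤ → Ω → (Fin n → ℝ)) (t : ℤ) (ω : Ω) : Fin n → ℝ :=
  X t ω - (NormedSpace.exp (-H)).mulVec (X (t - 1) ω)

/-- The noise process `G`. -/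
noncomputable def Gn {Ω : Type*} {n : ℕ} (H : Matrix (Fin n) (Fin n) ℝ)
    (X : ℤ → Ω → (Fin n → ℝ)) (t : ℤ) (ω : Ω) : Fin n → ℝ :=
  Stmt5Aux.Psum (fun k => Dn H X k ω) t


/-- every strictly stationary process `X` admits, for any symmetric
positive definite `H`, a representation `Δ_t X = (e^{−H} − I) X_{t−1} + Δ_t G`,
i.e. `X_t − e^{−H} X_{t−1} = Δ_t G`, with a noise `G ∈ 𝒢_H`; moreover
`e^{tH} X_t → 0` in probability as `t → −∞`. -/
theorem stmt5 {n : ℕ} [MeasurableSpace Ω] (μ : Measure Ω) [IsProbabilityMeasure μ]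
    (H : Matrix (Fin n) (Fin n) ℝ) (hH : H.PosDef)
    (X : ℤ → Ω → (Fin n → ℝ)) (hmX : ∀ t, Measurable (X t))
    (hX : IsStationaryProcess μ X) :
    (∃ G : ℤ → Ω → (Fin n → ℝ), (∀ t, Measurable (G t)) ∧ MemG μ H G ∧
      ∀ (t : ℤ) (ω : Ω), X t ω - X (t - 1) ω =
        (NormedSpace.exp (-H) - 1).mulVec (X (t - 1) ω) + (G t ω - G (t - 1) ω)) ∧
      TendstoInMeasure μ (fun t ω => (zexp H t).mulVec (X t ω)) Filter.atBot
        (fun _ => (0 : Fin n → ℝ)) := by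
  classical
  set A : Matrix (Fin n) (Fin n) ℝ := NormedSpace.exp (-H) with hAdef
  -- basic pointwise facts about `Gn`
  have hGdiff : ∀ (t : ℤ) (ω : Ω), Gn H X t ω - Gn H X (t - 1) ω = Dn H X t ω :=
    fun t ω => Stmt5Aux.Psum_sub (fun k => Dn H X k ω) t
  have hmD : ∀ k, Measurable (Dn H X k) := fun k =>
    (hmX k).sub ((Stmt5Aux.continuous_mulVec A).measurable.comp (hmX (k - 1)))
  have hmG : ∀ t, Measurable (Gn H X t) := by
    intro t
    have : Gn H X t = fun ω => (∑ k ∈ Finset.Icc 1 t, Dn H X k ω)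
        - ∑ k ∈ Finset.Icc (t + 1) 0, Dn H X k ω := rfl
    rw [this]
    exact (Finset.measurable_sum _ fun k _ => hmD k).sub
      (Finset.measurable_sum _ fun k _ => hmD k)
  -- identical one-dimensional distributions
  have hid : ∀ (t : ℤ) (M : ℝ), μ {ω | M ≤ ‖X t ω‖} = μ {ω | M ≤ ‖X 0 ω‖} := by
    intro t M
    have h := hX t 1 (fun _ => (0 : ℤ))
    have hS : MeasurableSet {v : Fin 1 → Fin n → ℝ | M ≤ ‖v 0‖} :=
      measurableSet_le measurable_const ((measurable_pi_apply 0).norm)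
    have h1 := congrArg (fun ν : Measure (Fin 1 → Fin n → ℝ) => ν {v | M ≤ ‖v 0‖}) h
    simp only at h1
    rw [Measure.map_apply (measurable_pi_lambda _ fun _ => hmX _) hS,
        Measure.map_apply (measurable_pi_lambda _ fun _ => hmX _) hS] at h1
    simpa [Set.preimage_setOf_eq] using h1
  -- the key convergence in probability
  have hmat := Stmt5Aux.tendsto_zexp_atBot hH
  have hc : Tendsto (fun t : ℤ => Stmt5Aux.entryBound (zexp H t)) atBot (𝓝 0) := by
    have := (Stmt5Aux.continuous_entryBound.tendsto 0).comp hmat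
    simpa [Function.comp_def, Stmt5Aux.entryBound_zero] using this
  have hmain : TendstoInMeasure μ (fun t ω => (zexp H t).mulVec (X t ω)) atBot
      (fun _ => (0 : Fin n → ℝ)) := by
    rw [tendstoInMeasure_iff_dist]
    intro ε hε
    rw [ENNReal.tendsto_nhds_zero]
    intro δ hδ
    obtain ⟨M, hM⟩ : ∃ M : ℕ, μ {ω | (M : ℝ) ≤ ‖X 0 ω‖} ≤ δ := by
      have hmeas : ∀ M : ℕ, NullMeasurableSet {ω | (M : ℝ) ≤ ‖X 0 ω‖} μ := fun M =>
        (measurableSet_le measurable_const (hmX 0).norm).nullMeasurableSet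
      have hanti : Antitone fun M : ℕ => {ω | (M : ℝ) ≤ ‖X 0 ω‖} := by
        intro M M' hMM' ω hω
        exact le_trans (show (M:ℝ) ≤ (M':ℝ) by exact_mod_cast hMM') hω
      have hint : (⋂ M : ℕ, {ω | (M : ℝ) ≤ ‖X 0 ω‖}) = ∅ := by
        ext ω
        simp only [Set.mem_iInter, Set.mem_setOf_eq, Set.mem_empty_iff_false, iff_false]
        push_neg
        obtain ⟨M, hMgt⟩ := exists_nat_gt ‖X 0 ω‖
        exact ⟨M, hMgt⟩
      have htend := MeasureTheory.tendsto_measure_iInter_atTop hmeas hanti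
        ⟨0, measure_ne_top μ _⟩
      rw [hint] at htend
      simp only [Function.comp_def, measure_empty] at htend
      exact (ENNReal.tendsto_nhds_zero.mp htend δ hδ).exists
    have hev : ∀ᶠ t : ℤ in atBot, Stmt5Aux.entryBound (zexp H t) * (M : ℝ) < ε := by
      have h0 : Tendsto (fun t : ℤ => Stmt5Aux.entryBound (zexp H t) * (M : ℝ))
          atBot (𝓝 0) := by simpa using hc.mul_const (M : ℝ)
      exact h0.eventually (gt_mem_nhds hε)
    filter_upwards [hev] with t ht
    have hsub : {x | ε ≤ dist ((zexp H t).mulVec (X t x)) 0}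
        ⊆ {ω | (M : ℝ) ≤ ‖X t ω‖} := by
      intro ω hω
      simp only [Set.mem_setOf_eq, dist_zero_right] at hω ⊢
      by_contra hlt
      push_neg at hlt
      have h1 : ‖(zexp H t).mulVec (X t ω)‖ ≤ Stmt5Aux.entryBound (zexp H t) * (M : ℝ) :=
        le_trans (Stmt5Aux.norm_mulVec_le _ _)
          (mul_le_mul_of_nonneg_left hlt.le (Stmt5Aux.entryBound_nonneg _))
      exact absurd (lt_of_le_of_lt (le_trans hω h1) ht) (lt_irrefl ε)
    calc μ {x | ε ≤ dist ((zexp H t).mulVec (X t x)) 0}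
        ≤ μ {ω | (M : ℝ) ≤ ‖X t ω‖} := measure_mono hsub
      _ = μ {ω | (M : ℝ) ≤ ‖X 0 ω‖} := hid t (M : ℝ)
      _ ≤ δ := hM
  -- partial sums telescope
  have hPS : ∀ l : ℤ, l ≤ 0 → ∀ ω, partialSumG H (Gn H X) l ω
      = X 0 ω - (zexp H (l - 1)).mulVec (X (l - 1) ω) := by
    intro l hl ω
    have hterm : ∀ k : ℤ, (zexp H k).mulVec (Gn H X k ω - Gn H X (k - 1) ω)
        = (fun k' : ℤ => (zexp H k').mulVec (X k' ω)) k
          - (fun k' : ℤ => (zexp H k').mulVec (X k' ω)) (k - 1) := by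
      intro k
      rw [hGdiff k ω]
      show (zexp H k).mulVec (X k ω - A.mulVec (X (k - 1) ω)) = _
      rw [Matrix.mulVec_sub, Matrix.mulVec_mulVec, hAdef, Stmt5Aux.zexp_mul_exp_neg]
    show ∑ k ∈ Finset.Icc l 0, (zexp H k).mulVec (Gn H X k ω - Gn H X (k - 1) ω) = _
    rw [Finset.sum_congr rfl fun k _ => hterm k,
      Stmt5Aux.sum_telescope (fun k' : ℤ => (zexp H k').mulVec (X k' ω)) hl,
      Stmt5Aux.zexp_zero, Matrix.one_mulVec]
  have hTIMps : TendstoInMeasure μ (fun l => partialSumG H (Gn H X) l) atBot (X 0) := by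
    rw [tendstoInMeasure_iff_dist]
    intro ε hε
    have h1 := tendstoInMeasure_iff_dist.mp hmain ε hε
    have h2 : Tendsto (fun l : ℤ => l - 1) atBot atBot :=
      tendsto_atBot_add_const_right atBot (-1) tendsto_id
    have h3 := h1.comp h2
    refine h3.congr' ?_
    filter_upwards [eventually_le_atBot (0 : ℤ)] with l hl
    refine congrArg μ ?_
    ext ω
    simp only [Function.comp_apply, Set.mem_setOf_eq, dist_zero_right, dist_eq_norm, sub_zero]
    rw [hPS l hl ω,
      show X 0 ω - (zexp H (l - 1)).mulVec (X (l - 1) ω) - X 0 ω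
        = -((zexp H (l - 1)).mulVec (X (l - 1) ω)) by abel, norm_neg]
  -- stationary increments
  have hSI : HasStationaryIncrements μ (Gn H X) := by
    intro s m tv
    set T : ℕ := Finset.univ.sup fun i => (tv i).natAbs with hT
    have hTb : ∀ i, -(T : ℤ) ≤ tv i ∧ tv i ≤ (T : ℤ) := by
      intro i
      have h0 := Finset.le_sup (f := fun i => (tv i).natAbs) (Finset.mem_univ i)
      omega
    set N : ℕ := 2 * T + 1 with hN
    have hNpos : 0 < N := by omega
    set idx : ℤ → Fin N := fun k => ⟨(k + T).toNat % N, Nat.mod_lt _ hNpos⟩ with hidx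
    have hidxval : ∀ k : ℤ, -(T : ℤ) ≤ k → k ≤ (T : ℤ) → ((idx k : ℤ) - T = k) := by
      intro k h1 h2
      simp only [hidx]
      have h4 : (k + T).toNat < N := by omega
      rw [Nat.mod_eq_of_lt h4]
      omega
    set Ψ : (Fin N → (Fin n → ℝ)) → (Fin m → (Fin n → ℝ)) := fun v i =>
      (∑ k ∈ Finset.Icc 1 (tv i), (v (idx k) - A.mulVec (v (idx (k - 1)))))
      - ∑ k ∈ Finset.Icc (tv i + 1) 0, (v (idx k) - A.mulVec (v (idx (k - 1)))) with hΨ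
    have hmΨ : Measurable Ψ := by
      refine measurable_pi_lambda _ fun i => Measurable.sub ?_ ?_ <;>
        exact Finset.measurable_sum _ fun k _ =>
          (measurable_pi_apply _).sub
            ((Stmt5Aux.continuous_mulVec A).measurable.comp (measurable_pi_apply _))
    have hkey : ∀ (s' : ℤ) (ω : Ω),
        (fun i => Gn H X (tv i + s') ω - Gn H X s' ω)
          = Ψ (fun j : Fin N => X ((j : ℤ) - T + s') ω) := by
      intro s' ω
      funext i
      have hv : ∀ k : ℤ, -(T : ℤ) ≤ k → k ≤ (T : ℤ) →
          (fun j : Fin N => X ((j : ℤ) - T + s') ω) (idx k) = X (k + s') ω := by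
        intro k h1 h2
        simp only
        rw [hidxval k h1 h2]
      have hterm : ∀ k : ℤ, -(T : ℤ) + 1 ≤ k → k ≤ (T : ℤ) →
          ((fun j : Fin N => X ((j : ℤ) - T + s') ω) (idx k)
            - A.mulVec ((fun j : Fin N => X ((j : ℤ) - T + s') ω) (idx (k - 1))))
          = Dn H X (k + s') ω := by
        intro k h1 h2
        rw [hv k (by omega) h2, hv (k - 1) (by omega) (by omega)]
        show _ = X (k + s') ω - A.mulVec (X (k + s' - 1) ω)
        have h5 : k - 1 + s' = k + s' - 1 := by omega
        rw [h5]
      have e1 : Finset.Icc (s' + 1) (tv i + s')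
          = (Finset.Icc 1 (tv i)).map (addRightEmbedding s') := by
        rw [Finset.map_add_right_Icc]
        congr 1
        omega
      have e2 : Finset.Icc (tv i + s' + 1) s'
          = (Finset.Icc (tv i + 1) 0).map (addRightEmbedding s') := by
        rw [Finset.map_add_right_Icc]
        congr 1 <;> omega
      have hdiff : Gn H X (tv i + s') ω - Gn H X s' ω
          = ∑ k ∈ Finset.Icc (s' + 1) (tv i + s'), Dn H X k ω
            - ∑ k ∈ Finset.Icc (tv i + s' + 1) s', Dn H X k ω :=
        Stmt5Aux.Psum_diff (fun k => Dn H X k ω) s' (tv i + s')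
      rw [hdiff, e1, e2, Finset.sum_map, Finset.sum_map]
      show _ = (∑ k ∈ Finset.Icc 1 (tv i), _) - ∑ k ∈ Finset.Icc (tv i + 1) 0, _
      congr 1
      · refine Finset.sum_congr rfl fun k hk => ?_
        simp only [Finset.mem_Icc] at hk
        have := hTb i
        rw [show (addRightEmbedding s') k = k + s' from rfl]
        exact (hterm k (by omega) (by omega)).symm
      · refine Finset.sum_congr rfl fun k hk => ?_
        simp only [Finset.mem_Icc] at hk
        have := hTb i
        rw [show (addRightEmbedding s') k = k + s' from rfl]
        exact (hterm k (by omega) (by omega)).symm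
    -- now use stationarity of X
    have hinner : ∀ s' : ℤ, Measurable (fun ω (j : Fin N) => X ((j : ℤ) - T + s') ω) :=
      fun s' => measurable_pi_lambda _ fun _ => hmX _
    have hstat := hX s N (fun j : Fin N => (j : ℤ) - T)
    calc μ.map (fun ω i => Gn H X (tv i + s) ω - Gn H X s ω)
        = μ.map (Ψ ∘ fun ω (j : Fin N) => X ((j : ℤ) - T + s) ω) := by
          congr 1
          funext ω
          exact hkey s ω
      _ = (μ.map (fun ω (j : Fin N) => X ((j : ℤ) - T + s) ω)).map Ψ :=
          (Measure.map_map hmΨ (hinner s)).symm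
      _ = (μ.map (fun ω (j : Fin N) => X ((j : ℤ) - T) ω)).map Ψ := by rw [hstat]
      _ = μ.map (Ψ ∘ fun ω (j : Fin N) => X ((j : ℤ) - T) ω) :=
          Measure.map_map hmΨ (measurable_pi_lambda _ fun _ => hmX _)
      _ = μ.map (fun ω i => Gn H X (tv i) ω - Gn H X 0 ω) := by
          congr 1
          funext ω
          have := (hkey 0 ω).symm
          simpa [add_zero] using this
  refine ⟨⟨Gn H X, hmG, ⟨fun ω => Stmt5Aux.Psum_zero _, hSI, ⟨X 0, hTIMps⟩⟩, ?_⟩, hmain⟩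
  intro t ω
  rw [hGdiff t ω]
  show _ = (A - 1).mulVec (X (t - 1) ω) + (X t ω - A.mulVec (X (t - 1) ω))
  rw [Matrix.sub_mulVec, Matrix.one_mulVec]
  abel
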